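/- In λS, for every pure context E, variable k, closed term t with k ∉ FV(t), and evaluation context F, one-step reduction gives F[⟨E[Sk.⟨t⟩]⟩] →v F[⟨⟨t⟩{λx.⟨E[x]⟩/k}⟩] = F[⟨⟨t⟩⟩] and F[⟨E[Sk.t]⟩] →v F[⟨t⟩]; hence if ⟨⟨t⟩⟩ and ⟨t⟩ evaluate to the same values, F[⟨E[Sk.⟨t⟩]⟩] and F[⟨E[Sk.t]⟩] reduce to terms that evaluate to the same values (validating the axiom Sk.⟨t⟩ = Sk.t in context). -/

import Mathlib

/-- Terms of the calculus λS: variables, abstractions, applications,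
    shift (Sk.t) and reset (⟨t⟩). -/
inductive Tm : Type
  | var : ℕ → Tm
  | lam : ℕ → Tm → Tm
  | app : Tm → Tm → Tm
  | shift : ℕ → Tm → Tm
  | reset : Tm → Tm
deriving DecidableEq

namespace Tm

/-- Values are λ-abstractions. -/
def IsValue : Tm → Prop
  | lam _ _ => True
  | _ => False

/-- Free variables. -/
def fv : Tm → Finset ℕ
  | var x => {x}
  | lam x t => fv t \ {x}
  | app a b => fv a ∪ fv b
  | shift k t => fv t \ {k}
  | reset t => fv t

def Closed (t : Tm) : Prop := fv t = ∅

/-- Substitution t{v/x} (substituted terms are closed values, so no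
    capture can occur). -/
def subst : Tm → ℕ → Tm → Tm
  | var y, x, v => if y = x then v else var y
  | lam y t, x, v => if y = x then lam y t else lam y (subst t x v)
  | app a b, x, v => app (subst a x v) (subst b x v)
  | shift k t, x, v => if k = x then shift k t else shift k (subst t x v)
  | reset t, x, v => reset (subst t x v)

end Tm

/-- (Evaluation) contexts F ::= [] | v F | F t | ⟨F⟩, represented outside-in.
    Pure contexts E are those with no reset constructor. -/
inductive Ctx : Type
  | hole : Ctx
  | appR : Tm → Ctx → Ctx   -- v F
  | appL : Ctx → Tm → Ctx   -- F t
  | reset : Ctx → Ctx       -- ⟨F⟩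
deriving DecidableEq

namespace Ctx

def plug : Ctx → Tm → Tm
  | hole, t => t
  | appR v F, t => Tm.app v (F.plug t)
  | appL F u, t => Tm.app (F.plug t) u
  | reset F, t => Tm.reset (F.plug t)

/-- Well-formedness: in `v F` the term v must be a value. -/
def Wf : Ctx → Prop
  | hole => True
  | appR v F => v.IsValue ∧ F.Wf
  | appL F _ => F.Wf
  | reset F => F.Wf

/-- Pure contexts contain no reset around the hole. -/
def Pure : Ctx → Prop
  | hole => True
  | appR _ F => F.Pure
  | appL F _ => F.Pure
  | reset _ => False

def fv : Ctx → Finset ℕ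
  | hole => ∅
  | appR v F => v.fv ∪ F.fv
  | appL F u => F.fv ∪ u.fv
  | reset F => F.fv

/-- Context composition: (F.comp G)[t] = F[G[t]]. -/
def comp : Ctx → Ctx → Ctx
  | hole, G => G
  | appR v F, G => appR v (F.comp G)
  | appL F u, G => appL (F.comp G) u
  | reset F, G => reset (F.comp G)

end Ctx

/-- A canonical fresh variable not occurring in the finite set s. -/
def fresh (s : Finset ℕ) : ℕ := s.sup id + 1

/-- The reduction relation →v of λS. -/
inductive Red : Tm → Tm → Prop
  | beta (F : Ctx) (x : ℕ) (t v : Tm) :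
      F.Wf → v.IsValue →
      Red (F.plug (Tm.app (Tm.lam x t) v)) (F.plug (t.subst x v))
  | shift (F E : Ctx) (k : ℕ) (t : Tm) :
      F.Wf → E.Wf → E.Pure →
      Red (F.plug (Tm.reset (E.plug (Tm.shift k t))))
          (F.plug (Tm.reset (t.subst k
            (Tm.lam (fresh E.fv) (Tm.reset (E.plug (Tm.var (fresh E.fv))))))))
  | reset (F : Ctx) (v : Tm) :
      F.Wf → v.IsValue →
      Red (F.plug (Tm.reset v)) (F.plug v)

/-- A term is stuck if it is not a value and admits no reduction step. -/
def Stuck (t : Tm) : Prop := ¬ t.IsValue ∧ ∀ t', ¬ Red t t'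

/-- A normal form is a value or a stuck term. -/
def NormalForm (t : Tm) : Prop := t.IsValue ∨ Stuck t

/-- Reflexive-transitive closure of reduction. -/
def Steps : Tm → Tm → Prop := Relation.ReflTransGen Red

/-- Evaluation: t ⇓ t' when t →v* t' and t' is irreducible. -/
def Evals (t t' : Tm) : Prop := Steps t t' ∧ ∀ u, ¬ Red t' u

/-- Redexes: (λx.t) v, ⟨E[Sk.t]⟩ with E pure, and ⟨v⟩. -/
def IsRedex (r : Tm) : Prop :=
  (∃ x t v, Tm.IsValue v ∧ r = Tm.app (Tm.lam x t) v) ∨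
  (∃ E : Ctx, ∃ k t, E.Wf ∧ E.Pure ∧ r = Tm.reset (E.plug (Tm.shift k t))) ∨
  (∃ v, Tm.IsValue v ∧ r = Tm.reset v)

/-- Divergence: an infinite reduction sequence. -/
def Diverges (t : Tm) : Prop := ∃ f : ℕ → Tm, f 0 = t ∧ ∀ n, Red (f n) (f (n + 1))

/-- Ω = (λx.x x)(λx.x x). -/
def Omega : Tm :=
  Tm.app (Tm.lam 0 (Tm.app (Tm.var 0) (Tm.var 0)))
         (Tm.lam 0 (Tm.app (Tm.var 0) (Tm.var 0)))

/-- Arbitrary one-hole contexts C. -/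
inductive GCtx : Type
  | hole : GCtx
  | lam : ℕ → GCtx → GCtx
  | appL : GCtx → Tm → GCtx
  | appR : Tm → GCtx → GCtx
  | shift : ℕ → GCtx → GCtx
  | reset : GCtx → GCtx

def GCtx.plug : GCtx → Tm → Tm
  | hole, t => t
  | lam x C, t => Tm.lam x (C.plug t)
  | appL C u, t => Tm.app (C.plug t) u
  | appR u C, t => Tm.app u (C.plug t)
  | shift k C, t => Tm.shift k (C.plug t)
  | reset C, t => Tm.reset (C.plug t)

/-- Contextual equivalence for the relaxed semantics. -/
def CtxEquiv (t0 t1 : Tm) : Prop :=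
  ∀ C : GCtx, (C.plug t0).Closed → (C.plug t1).Closed →
    ((∃ v, v.IsValue ∧ Evals (C.plug t0) v) ↔ (∃ v, v.IsValue ∧ Evals (C.plug t1) v)) ∧
    ((∃ s, Stuck s ∧ Evals (C.plug t0) s) ↔ (∃ s, Stuck s ∧ Evals (C.plug t1) s))

/-- Contextual equivalence for the original (top-level reset) semantics. -/
def CtxEquivP (t0 t1 : Tm) : Prop :=
  ∀ C : GCtx, (Tm.reset (C.plug t0)).Closed → (Tm.reset (C.plug t1)).Closed →
    ((∃ v, v.IsValue ∧ Evals (Tm.reset (C.plug t0)) v) ↔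
     (∃ v, v.IsValue ∧ Evals (Tm.reset (C.plug t1)) v))

/-- The term-generating closure of a relation R on closed terms. -/
inductive TmClo (R : Tm → Tm → Prop) : Tm → Tm → Prop
  | base {t t'} : R t t' → TmClo R t t'
  | var (x : ℕ) : TmClo R (Tm.var x) (Tm.var x)
  | lam {t t'} (x : ℕ) : TmClo R t t' → TmClo R (Tm.lam x t) (Tm.lam x t')
  | app {a a' b b'} : TmClo R a a' → TmClo R b b' →
      TmClo R (Tm.app a b) (Tm.app a' b')
  | shift {t t'} (k : ℕ) : TmClo R t t' → TmClo R (Tm.shift k t) (Tm.shift k t')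
  | reset {t t'} : TmClo R t t' → TmClo R (Tm.reset t) (Tm.reset t')
section Aux

lemma subst_of_not_mem (v : Tm) : ∀ t : Tm, ∀ x, x ∉ t.fv → t.subst x v = t := by
  intro t
  induction t with
  | var y => intro x hx; simp [Tm.fv] at hx; simp [Tm.subst, Ne.symm hx]
  | lam y s ih =>
      intro x hx
      by_cases h : y = x
      · simp [Tm.subst, h]
      · simp [Tm.fv, Finset.mem_sdiff] at hx
        simp [Tm.subst, h, ih x (fun hm => h (hx hm).symm)]
  | app a b iha ihb =>
      intro x hx
      simp [Tm.fv] at hx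
      simp [Tm.subst, iha x hx.1, ihb x hx.2]
  | shift y s ih =>
      intro x hx
      by_cases h : y = x
      · simp [Tm.subst, h]
      · simp [Tm.fv, Finset.mem_sdiff] at hx
        simp [Tm.subst, h, ih x (fun hm => h (hx hm).symm)]
  | reset s ih =>
      intro x hx
      simp [Tm.fv] at hx
      simp [Tm.subst, ih x hx]

lemma plug_comp (F G : Ctx) (t : Tm) : (F.comp G).plug t = F.plug (G.plug t) := by
  induction F with
  | hole => rfl
  | appR v F ih => simp [Ctx.comp, Ctx.plug, ih]
  | appL F u ih => simp [Ctx.comp, Ctx.plug, ih]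
  | reset F ih => simp [Ctx.comp, Ctx.plug, ih]

lemma wf_comp {F G : Ctx} (hF : F.Wf) (hG : G.Wf) : (F.comp G).Wf := by
  induction F with
  | hole => exact hG
  | appR v F ih => exact ⟨hF.1, ih hF.2⟩
  | appL F u ih => exact ih hF
  | reset F ih => exact ih hF

lemma red_plug {a b : Tm} (F : Ctx) (hF : F.Wf) (h : Red a b) :
    Red (F.plug a) (F.plug b) := by
  cases h with
  | beta G x t v hG hv =>
      have := Red.beta (F.comp G) x t v (wf_comp hF hG) hv
      simpa [plug_comp] using this
  | shift G E k t hG hE hEp =>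
      have := Red.shift (F.comp G) E k t (wf_comp hF hG) hE hEp
      simpa [plug_comp] using this
  | reset G v hG hv =>
      have := Red.reset (F.comp G) v (wf_comp hF hG) hv
      simpa [plug_comp] using this

lemma steps_plug {a b : Tm} (F : Ctx) (hF : F.Wf) (h : Steps a b) :
    Steps (F.plug a) (F.plug b) :=
  Relation.ReflTransGen.lift F.plug (fun _ _ hr => red_plug F hF hr) _ _ h

lemma not_value_plug_shift (E : Ctx) (k : ℕ) (t : Tm) :
    ¬ (E.plug (Tm.shift k t)).IsValue := by
  cases E <;> simp [Ctx.plug, Tm.IsValue]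

lemma not_value_plug_redex (F : Ctx) (r : Tm) (hr : IsRedex r) :
    ¬ (F.plug r).IsValue := by
  cases F with
  | hole =>
      rcases hr with ⟨x, t, v, hv, rfl⟩ | ⟨E, k, t, _, _, rfl⟩ | ⟨v, hv, rfl⟩ <;>
        simp [Ctx.plug, Tm.IsValue]
  | appR v F => simp [Ctx.plug, Tm.IsValue]
  | appL F u => simp [Ctx.plug, Tm.IsValue]
  | reset F => simp [Ctx.plug, Tm.IsValue]

lemma pure_shift_not_decomp :
    ∀ (E : Ctx) (k : ℕ) (t : Tm) (F : Ctx) (r : Tm), E.Pure → E.Wf → F.Wf →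
      IsRedex r → E.plug (Tm.shift k t) ≠ F.plug r := by
  intro E
  induction E with
  | hole =>
      intro k t F r _ _ hF hr heq
      cases F with
      | hole =>
          rcases hr with ⟨x, t0, v, hv, rfl⟩ | ⟨E', k', t', _, _, rfl⟩ | ⟨v, hv, rfl⟩ <;>
            simp [Ctx.plug] at heq
      | appR v F => simp [Ctx.plug] at heq
      | appL F u => simp [Ctx.plug] at heq
      | reset F => simp [Ctx.plug] at heq
  | appR v E ih =>
      intro k t F r hEp hE hF hr heq
      cases F with
      | hole =>
          rcases hr with ⟨x, t0, w, hw, rfl⟩ | ⟨E', k', t', _, _, rfl⟩ | ⟨w, hw, rfl⟩ <;>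
            simp [Ctx.plug] at heq
          exact not_value_plug_shift E k t (by rw [heq.2]; exact hw)
      | appR w F =>
          simp [Ctx.plug] at heq
          exact ih k t F r hEp hE.2 hF.2 hr heq.2
      | appL F u =>
          simp [Ctx.plug] at heq
          exact not_value_plug_redex F r hr (by rw [← heq.1]; exact hE.1)
      | reset F => simp [Ctx.plug] at heq
  | appL E u ih =>
      intro k t F r hEp hE hF hr heq
      cases F with
      | hole =>
          rcases hr with ⟨x, t0, w, hw, rfl⟩ | ⟨E', k', t', _, _, rfl⟩ | ⟨w, hw, rfl⟩ <;>
            simp [Ctx.plug] at heq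
          exact not_value_plug_shift E k t (by rw [heq.1]; trivial)
      | appR w F =>
          simp [Ctx.plug] at heq
          exact not_value_plug_shift E k t (by rw [heq.1]; exact hF.1)
      | appL F u' =>
          simp [Ctx.plug] at heq
          exact ih k t F r hEp hE hF hr heq.1
      | reset F => simp [Ctx.plug] at heq
  | reset E ih => intro k t F r hEp; exact absurd hEp (by simp [Ctx.Pure])

lemma shift_decomp_uniq :
    ∀ (E1 : Ctx) (k1 : ℕ) (t1 : Tm) (E2 : Ctx) (k2 : ℕ) (t2 : Tm),
      E1.Pure → E1.Wf → E2.Pure → E2.Wf →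
      E1.plug (Tm.shift k1 t1) = E2.plug (Tm.shift k2 t2) →
      E1 = E2 ∧ k1 = k2 ∧ t1 = t2 := by
  intro E1
  induction E1 with
  | hole =>
      intro k1 t1 E2 k2 t2 _ _ hp2 hw2 heq
      cases E2 with
      | hole => simp [Ctx.plug] at heq; exact ⟨rfl, heq⟩
      | appR v F => simp [Ctx.plug] at heq
      | appL F u => simp [Ctx.plug] at heq
      | reset F => simp [Ctx.plug] at heq
  | appR v E ih =>
      intro k1 t1 E2 k2 t2 hp1 hw1 hp2 hw2 heq
      cases E2 with
      | hole => simp [Ctx.plug] at heq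
      | appR w F =>
          simp [Ctx.plug] at heq
          obtain ⟨rfl, h2⟩ := heq
          obtain ⟨rfl, rfl, rfl⟩ := ih k1 t1 F k2 t2 hp1 hw1.2 hp2 hw2.2 h2
          exact ⟨rfl, rfl, rfl⟩
      | appL F u =>
          simp [Ctx.plug] at heq
          exact absurd (by rw [← heq.1]; exact hw1.1 : (F.plug (Tm.shift k2 t2)).IsValue)
            (not_value_plug_shift F k2 t2)
      | reset F => simp [Ctx.plug] at heq
  | appL E u ih =>
      intro k1 t1 E2 k2 t2 hp1 hw1 hp2 hw2 heq
      cases E2 with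
      | hole => simp [Ctx.plug] at heq
      | appR w F =>
          simp [Ctx.plug] at heq
          exact absurd (by rw [heq.1]; exact hw2.1 : (E.plug (Tm.shift k1 t1)).IsValue)
            (not_value_plug_shift E k1 t1)
      | appL F u' =>
          simp [Ctx.plug] at heq
          obtain ⟨h1, rfl⟩ := heq
          obtain ⟨rfl, rfl, rfl⟩ := ih k1 t1 F k2 t2 hp1 hw1 hp2 hw2 h1
          exact ⟨rfl, rfl, rfl⟩
      | reset F => simp [Ctx.plug] at heq
  | reset E ih => intro k1 t1 E2 k2 t2 hp1; exact absurd hp1 (by simp [Ctx.Pure])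

lemma decomp_uniq :
    ∀ (F1 : Ctx) (r1 : Tm) (F2 : Ctx) (r2 : Tm), F1.Wf → F2.Wf →
      IsRedex r1 → IsRedex r2 → F1.plug r1 = F2.plug r2 → F1 = F2 ∧ r1 = r2 := by
  have hole_case : ∀ (r1 : Tm) (F2 : Ctx) (r2 : Tm), F2.Wf → IsRedex r1 → IsRedex r2 →
      r1 = F2.plug r2 → Ctx.hole = F2 ∧ r1 = r2 := by
    intro r1 F2 r2 hw2 hr1 hr2 heq
    cases F2 with
    | hole => exact ⟨rfl, heq⟩
    | appR v F =>
        exfalso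
        rcases hr1 with ⟨x, t0, w, hw, rfl⟩ | ⟨E, k, t, hEw, hEp, rfl⟩ | ⟨w, hw, rfl⟩ <;>
          simp [Ctx.plug] at heq
        exact not_value_plug_redex F r2 hr2 (by rw [← heq.2]; exact hw)
    | appL F u =>
        exfalso
        rcases hr1 with ⟨x, t0, w, hw, rfl⟩ | ⟨E, k, t, hEw, hEp, rfl⟩ | ⟨w, hw, rfl⟩ <;>
          simp [Ctx.plug] at heq
        exact not_value_plug_redex F r2 hr2 (by rw [← heq.1]; trivial)
    | reset F =>
        exfalso
        rcases hr1 with ⟨x, t0, w, hw, rfl⟩ | ⟨E, k, t, hEw, hEp, rfl⟩ | ⟨w, hw, rfl⟩ <;>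
          simp [Ctx.plug] at heq
        · exact pure_shift_not_decomp E k t F r2 hEp hEw hw2 hr2 heq
        · exact not_value_plug_redex F r2 hr2 (by rw [← heq]; exact hw)
  intro F1
  induction F1 with
  | hole => intro r1 F2 r2 _ hw2 hr1 hr2 heq; exact hole_case r1 F2 r2 hw2 hr1 hr2 heq
  | appR v F ih =>
      intro r1 F2 r2 hw1 hw2 hr1 hr2 heq
      cases F2 with
      | hole =>
          obtain ⟨h1, h2⟩ := hole_case r2 (Ctx.appR v F) r1 hw1 hr2 hr1 heq.symm
          exact absurd h1 (by simp)
      | appR w G =>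
          simp [Ctx.plug] at heq
          obtain ⟨rfl, h2⟩ := heq
          obtain ⟨h1, h2⟩ := ih r1 G r2 hw1.2 hw2.2 hr1 hr2 h2
          exact ⟨by rw [h1], h2⟩
      | appL G u =>
          simp [Ctx.plug] at heq
          exact absurd (show (G.plug r2).IsValue by rw [← heq.1]; exact hw1.1)
            (not_value_plug_redex G r2 hr2)
      | reset G => simp [Ctx.plug] at heq
  | appL F u ih =>
      intro r1 F2 r2 hw1 hw2 hr1 hr2 heq
      cases F2 with
      | hole =>
          obtain ⟨h1, h2⟩ := hole_case r2 (Ctx.appL F u) r1 hw1 hr2 hr1 heq.symm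
          exact absurd h1 (by simp)
      | appR w G =>
          simp [Ctx.plug] at heq
          exact absurd (show (F.plug r1).IsValue by rw [heq.1]; exact hw2.1)
            (not_value_plug_redex F r1 hr1)
      | appL G u' =>
          simp [Ctx.plug] at heq
          obtain ⟨h2, rfl⟩ := heq
          obtain ⟨h1, h2⟩ := ih r1 G r2 hw1 hw2 hr1 hr2 h2
          exact ⟨by rw [h1], h2⟩
      | reset G => simp [Ctx.plug] at heq
  | reset F ih =>
      intro r1 F2 r2 hw1 hw2 hr1 hr2 heq
      cases F2 with
      | hole =>
          obtain ⟨h1, h2⟩ := hole_case r2 (Ctx.reset F) r1 hw1 hr2 hr1 heq.symm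
          exact absurd h1 (by simp)
      | appR w G => simp [Ctx.plug] at heq
      | appL G u' => simp [Ctx.plug] at heq
      | reset G =>
          simp [Ctx.plug] at heq
          obtain ⟨h1, h2⟩ := ih r1 G r2 hw1 hw2 hr1 hr2 heq
          exact ⟨by rw [h1], h2⟩

inductive Contract : Tm → Tm → Prop
  | beta (x : ℕ) (t v : Tm) : v.IsValue →
      Contract (Tm.app (Tm.lam x t) v) (t.subst x v)
  | shift (E : Ctx) (k : ℕ) (t : Tm) : E.Wf → E.Pure →
      Contract (Tm.reset (E.plug (Tm.shift k t)))
        (Tm.reset (t.subst k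
          (Tm.lam (fresh E.fv) (Tm.reset (E.plug (Tm.var (fresh E.fv)))))))
  | reset (v : Tm) : v.IsValue → Contract (Tm.reset v) v

lemma contract_redex {r c : Tm} (h : Contract r c) : IsRedex r := by
  cases h with
  | beta x t v hv => exact Or.inl ⟨x, t, v, hv, rfl⟩
  | shift E k t hw hp => exact Or.inr (Or.inl ⟨E, k, t, hw, hp, rfl⟩)
  | reset w hw => exact Or.inr (Or.inr ⟨c, hw, rfl⟩)

lemma contract_inv {r c : Tm} (h : Contract r c) :
    (∃ x t v, v.IsValue ∧ r = Tm.app (Tm.lam x t) v ∧ c = t.subst x v) ∨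
    (∃ (E : Ctx) (k : ℕ) (t : Tm), E.Wf ∧ E.Pure ∧
      r = Tm.reset (E.plug (Tm.shift k t)) ∧
      c = Tm.reset (t.subst k
        (Tm.lam (fresh E.fv) (Tm.reset (E.plug (Tm.var (fresh E.fv))))))) ∨
    (∃ v, v.IsValue ∧ r = Tm.reset v ∧ c = v) := by
  cases h with
  | beta x t v hv => exact Or.inl ⟨x, t, v, hv, rfl, rfl⟩
  | shift E k t hw hp => exact Or.inr (Or.inl ⟨E, k, t, hw, hp, rfl, rfl⟩)
  | reset w hw => exact Or.inr (Or.inr ⟨c, hw, rfl, rfl⟩)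

lemma contract_det {r c1 c2 : Tm} (h1 : Contract r c1) (h2 : Contract r c2) :
    c1 = c2 := by
  rcases contract_inv h1 with ⟨x, t, v, hv, rfl, rfl⟩ |
      ⟨E, k, t, hw, hp, rfl, rfl⟩ | ⟨v, hv, rfl, rfl⟩ <;>
    rcases contract_inv h2 with ⟨x', t', v', hv', heq, rfl⟩ |
      ⟨E', k', t', hw', hp', heq, rfl⟩ | ⟨v', hv', heq, rfl⟩
  · simp only [Tm.app.injEq, Tm.lam.injEq] at heq
    obtain ⟨⟨rfl, rfl⟩, rfl⟩ := heq
    rfl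
  · exact absurd heq (by simp)
  · exact absurd heq (by simp)
  · exact absurd heq (by simp)
  · simp only [Tm.reset.injEq] at heq
    obtain ⟨rfl, rfl, rfl⟩ := shift_decomp_uniq E k t E' k' t' hp hw hp' hw' heq
    rfl
  · simp only [Tm.reset.injEq] at heq
    exact absurd (show (E.plug (Tm.shift k t)).IsValue by rw [heq]; exact hv')
      (not_value_plug_shift E k t)
  · exact absurd heq (by simp)
  · simp only [Tm.reset.injEq] at heq
    exact absurd (show (E'.plug (Tm.shift k' t')).IsValue by rw [← heq]; exact hv)
      (not_value_plug_shift E' k' t')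
  · simp only [Tm.reset.injEq] at heq
    exact heq

lemma red_inv {s u : Tm} (h : Red s u) :
    ∃ (F : Ctx) (r c : Tm), F.Wf ∧ Contract r c ∧ s = F.plug r ∧ u = F.plug c := by
  cases h with
  | beta F x t v hF hv => exact ⟨F, _, _, hF, Contract.beta x t v hv, rfl, rfl⟩
  | shift F E k t hF hE hEp => exact ⟨F, _, _, hF, Contract.shift E k t hE hEp, rfl, rfl⟩
  | reset F v hF hv => exact ⟨F, _, _, hF, Contract.reset v hv, rfl, rfl⟩

lemma red_det {s u1 u2 : Tm} (h1 : Red s u1) (h2 : Red s u2) : u1 = u2 := by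
  obtain ⟨F1, r1, c1, hw1, hc1, rfl, rfl⟩ := red_inv h1
  obtain ⟨F2, r2, c2, hw2, hc2, heq, rfl⟩ := red_inv h2
  obtain ⟨rfl, rfl⟩ := decomp_uniq F1 r1 F2 r2 hw1 hw2 (contract_redex hc1)
    (contract_redex hc2) heq
  rw [contract_det hc1 hc2]

lemma steps_to_nf {x y z : Tm} (hxy : Steps x y) (hxz : Steps x z)
    (hz : ∀ u, ¬ Red z u) : Steps y z := by
  induction hxy using Relation.ReflTransGen.head_induction_on with
  | refl => exact hxz
  | head hstep _ ih =>
      rcases hxz.cases_head with rfl | ⟨c, hac, hcz⟩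
      · exact absurd hstep (hz _)
      · exact ih (red_det hstep hac ▸ hcz)

lemma evals_of_steps {x y : Tm} (h : Steps x y) :
    ∀ v, Evals x v ↔ Evals y v := by
  intro v
  constructor
  · rintro ⟨hs, hnf⟩; exact ⟨steps_to_nf h hs hnf, hnf⟩
  · rintro ⟨hs, hnf⟩; exact ⟨h.trans hs, hnf⟩

lemma trace_plug {a : Tm} (F : Ctx) (hF : F.Wf)
    (hdiv : ∀ a', Steps a a' → ∃ u, Red a' u) :
    ∀ z, Steps (F.plug a) z → ∃ a', Steps a a' ∧ z = F.plug a' := by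
  intro z h
  have key : ∀ x, Steps x z → ∀ a', x = F.plug a' → Steps a a' →
      ∃ a'', Steps a a'' ∧ z = F.plug a'' := by
    intro x hx
    induction hx using Relation.ReflTransGen.head_induction_on with
    | refl => intro a' rfl hs; exact ⟨a', hs, rfl⟩
    | head hstep htail ih =>
        rintro a' rfl hs
        obtain ⟨u, hu⟩ := hdiv a' hs
        have hred : Red (F.plug a') (F.plug u) := red_plug F hF hu
        exact ih u (red_det hstep hred) (hs.trans (Relation.ReflTransGen.single hu))
  exact key _ h a rfl Relation.ReflTransGen.refl

lemma no_nf_plug {a : Tm} (F : Ctx) (hF : F.Wf)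
    (hno : ∀ v, ¬ Evals a v) : ∀ v, ¬ Evals (F.plug a) v := by
  have hdiv : ∀ a', Steps a a' → ∃ u, Red a' u := by
    intro a' hs
    by_contra hcon
    push_neg at hcon
    exact hno a' ⟨hs, hcon⟩
  rintro v ⟨hs, hnf⟩
  obtain ⟨a', hsa, rfl⟩ := trace_plug F hF hdiv v hs
  obtain ⟨u, hu⟩ := hdiv a' hsa
  exact hnf _ (red_plug F hF hu)

end Aux

/-- F[⟨E[Sk.⟨t⟩]⟩] →v F[⟨⟨t⟩⟩] and F[⟨E[Sk.t]⟩] →v F[⟨t⟩]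
    (since k ∉ FV(t)); hence if ⟨⟨t⟩⟩ and ⟨t⟩ evaluate to the same values,
    the two reducts evaluate to the same values in any F. -/
theorem shift_reset_axiom (F E : Ctx) (k : ℕ) (t : Tm)
    (hF : F.Wf) (hE : E.Wf) (hEp : E.Pure) (hc : t.Closed)
    (hEc : E.fv = ∅) (hk : k ∉ t.fv) :
    Red (F.plug (Tm.reset (E.plug (Tm.shift k (Tm.reset t)))))
        (F.plug (Tm.reset (Tm.reset t))) ∧
    Red (F.plug (Tm.reset (E.plug (Tm.shift k t))))
        (F.plug (Tm.reset t)) ∧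
    ((∀ v, Evals (Tm.reset (Tm.reset t)) v ↔ Evals (Tm.reset t) v) →
      ∀ v, Evals (F.plug (Tm.reset (Tm.reset t))) v ↔
           Evals (F.plug (Tm.reset t)) v) := by
  refine ⟨?_, ?_, ?_⟩
  · have h1 := Red.shift F E k (Tm.reset t) hF hE hEp
    simpa [Tm.subst, subst_of_not_mem _ t k hk] using h1
  · have h1 := Red.shift F E k t hF hE hEp
    simpa [subst_of_not_mem _ t k hk] using h1
  · intro h v
    by_cases hex : ∃ v0, Evals (Tm.reset (Tm.reset t)) v0
    · obtain ⟨v0, hv0⟩ := hex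
      have hb := (h v0).mp hv0
      have s1 := steps_plug F hF hv0.1
      have s2 := steps_plug F hF hb.1
      rw [evals_of_steps s1 v, evals_of_steps s2 v]
    · push_neg at hex
      have hexb : ∀ v0, ¬ Evals (Tm.reset t) v0 :=
        fun v0 hv0 => hex v0 ((h v0).mpr hv0)
      exact iff_of_false (no_nf_plug F hF hex v) (no_nf_plug F hF hexb v)
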